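/- Let U ⊂ ℝⁿ be a bounded open set and let cov(U) denote its convex hull. If x₀ ∈ ∂cov(U) \ ∂U, then x₀ is not an extreme point of the closure of cov(U); consequently there exist distinct points y₀, z₀ ∈ ∂cov(U) such that x₀ lies in the open segment (y₀, z₀), and the whole segment [y₀, z₀] is contained in ∂cov(U). -/

import Mathlib

open Set Finset

lemma sum_dite_fin {M : Type*} [AddCommMonoid M] {k m : ℕ} (hkm : k ≤ m) (F : Fin k → M) :
    (∑ j : Fin m, if h : (j : ℕ) < k then F ⟨j, h⟩ else 0) = ∑ i : Fin k, F i := by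
  classical
  rw [← Finset.sum_subset (Finset.subset_univ (Finset.univ.map (Fin.castLEEmb hkm)))
    (by
      intro j _ hj
      have hlt : ¬ (j : ℕ) < k := by
        intro hlt
        exact hj (Finset.mem_map.2 ⟨⟨(j : ℕ), hlt⟩, Finset.mem_univ _, by
          simp [Fin.castLEEmb, Fin.ext_iff]⟩)
      simp [hlt])]
  rw [Finset.sum_map]
  apply Finset.sum_congr rfl
  intro i _
  simp [Fin.castLEEmb]

lemma aux_isCompact_convexHull {n : ℕ} {s : Set (EuclideanSpace ℝ (Fin n))}
    (hs : IsCompact s) : IsCompact (convexHull ℝ s) := by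
  classical
  set m := n + 1 with hm
  set f : (Fin m → ℝ) × (Fin m → EuclideanSpace ℝ (Fin n)) → EuclideanSpace ℝ (Fin n) :=
    fun wp => ∑ i, wp.1 i • wp.2 i with hf
  have hfc : Continuous f := by
    apply continuous_finset_sum
    intro i _
    exact ((continuous_apply i).comp continuous_fst).smul
      ((continuous_apply i).comp continuous_snd)
  have hD : IsCompact ((stdSimplex ℝ (Fin m)) ×ˢ (Set.univ.pi fun _ : Fin m => s)) :=
    IsCompact.prod (isCompact_stdSimplex ..) (isCompact_univ_pi fun _ => hs)
  have himg : f '' ((stdSimplex ℝ (Fin m)) ×ˢ (Set.univ.pi fun _ : Fin m => s))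
      = convexHull ℝ s := by
    apply Set.Subset.antisymm
    · rintro x ⟨⟨w, p⟩, ⟨hw, hp⟩, rfl⟩
      exact (convex_convexHull ℝ s).sum_mem (fun i _ => hw.1 i) hw.2
        (fun i _ => subset_convexHull ℝ s (hp i (Set.mem_univ i)))
    · intro x hx
      rw [convexHull_eq_union] at hx
      simp only [Set.mem_iUnion] at hx
      obtain ⟨t, hts, hai, hxt⟩ := hx
      have ht0 : t.Nonempty := by
        rcases t.eq_empty_or_nonempty with rfl | h
        · simp at hxt
        · exact h
      have hcard : t.card ≤ m := by
        have h1 := hai.card_le_finrank_succ (k := ℝ)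
        have h2 : Module.finrank ℝ (vectorSpan ℝ (Set.range ((↑) : t → EuclideanSpace ℝ (Fin n))))
            ≤ Module.finrank ℝ (EuclideanSpace ℝ (Fin n)) := Submodule.finrank_le _
        have h3 : Module.finrank ℝ (EuclideanSpace ℝ (Fin n)) = n := finrank_euclideanSpace_fin
        rw [Fintype.card_coe] at h1
        omega
      rw [Finset.convexHull_eq] at hxt
      obtain ⟨w, hw0, hw1, hwx⟩ := hxt
      rw [t.centerMass_eq_of_sum_1 id hw1] at hwx
      set k := t.card with hk
      set σ : Fin k → EuclideanSpace ℝ (Fin n) := fun i => ((t.equivFin.symm i : t) :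
        EuclideanSpace ℝ (Fin n)) with hσ
      have hσt : ∀ i, σ i ∈ t := fun i => (t.equivFin.symm i).2
      set W : Fin m → ℝ := fun j => if h : (j : ℕ) < k then w (σ ⟨j, h⟩) else 0 with hW
      have hk0 : 0 < k := Finset.card_pos.2 ht0
      set P : Fin m → EuclideanSpace ℝ (Fin n) :=
        fun j => if h : (j : ℕ) < k then σ ⟨j, h⟩ else σ ⟨0, hk0⟩ with hP
      have hσsum : ∀ {M : Type} [AddCommMonoid M] (g : EuclideanSpace ℝ (Fin n) → M),
          (∑ i : Fin k, g (σ i)) = ∑ y ∈ t, g y := by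
        intro M _ g
        rw [← Finset.sum_coe_sort t g]
        exact Fintype.sum_equiv t.equivFin.symm _ _ (fun i => rfl)
      refine ⟨(W, P), ⟨⟨?_, ?_⟩, ?_⟩, ?_⟩
      · intro j
        by_cases h : (j : ℕ) < k <;> simp only [hW, h, dite_true, dite_false]
        · exact hw0 _ (hσt _)
        · exact le_refl 0
      · show (∑ j : Fin m, W j) = 1
        have e1 : (∑ j : Fin m, W j) = ∑ i : Fin k, w (σ i) :=
          sum_dite_fin hcard (fun i => w (σ i))
        rw [e1, hσsum w, hw1]
      · intro i _
        show P i ∈ s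
        by_cases h : (i : ℕ) < k <;> simp only [hP, h, dite_true, dite_false] <;>
          exact hts (hσt _)
      · show (∑ j : Fin m, W j • P j) = x
        have hterm : ∀ j : Fin m, W j • P j
            = if h : (j : ℕ) < k then w (σ ⟨j, h⟩) • σ ⟨j, h⟩ else 0 := by
          intro j
          by_cases h : (j : ℕ) < k <;> simp [hW, hP, h]
        have e2 : (∑ j : Fin m, if h : (j : ℕ) < k then w (σ ⟨j, h⟩) • σ ⟨j, h⟩ else 0)
            = ∑ i : Fin k, w (σ i) • σ i :=
          sum_dite_fin hcard (fun i => w (σ i) • σ i)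
        rw [Finset.sum_congr rfl fun j _ => hterm j, e2,
          hσsum (fun y => w y • y), ← hwx]
        simp
  rw [← himg]
  exact hD.image hfc

theorem stmt9 (n : ℕ) (hn : 2 ≤ n) (U : Set (EuclideanSpace ℝ (Fin n)))
    (hU : IsOpen U) (hb : Bornology.IsBounded U)
    (x₀ : EuclideanSpace ℝ (Fin n))
    (hx : x₀ ∈ frontier (convexHull ℝ U) \ frontier U) :
    x₀ ∉ Set.extremePoints ℝ (closure (convexHull ℝ U)) ∧
      ∃ y₀ z₀ : EuclideanSpace ℝ (Fin n), y₀ ≠ z₀ ∧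
        y₀ ∈ frontier (convexHull ℝ U) ∧ z₀ ∈ frontier (convexHull ℝ U) ∧
        x₀ ∈ openSegment ℝ y₀ z₀ ∧
        segment ℝ y₀ z₀ ⊆ frontier (convexHull ℝ U) := by
  classical
  obtain ⟨hxF, hxnF⟩ := hx
  set C := convexHull ℝ U with hC
  have hCconv : Convex ℝ C := convex_convexHull ℝ U
  have hxK : x₀ ∈ closure C := frontier_subset_closure hxF
  have hxnI : x₀ ∉ interior C := fun h => hxF.2 h
  have hU0 : x₀ ∉ closure U := by
    intro h
    by_cases hu : x₀ ∈ U
    · exact hxnI (interior_mono (subset_convexHull ℝ U) (by rwa [hU.interior_eq]))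
    · exact hxnF ⟨h, by rwa [hU.interior_eq]⟩
  have hcU : IsCompact (closure U) := hb.isCompact_closure
  have hK : closure C = convexHull ℝ (closure U) := by
    apply Set.Subset.antisymm
    · exact closure_minimal (convexHull_mono subset_closure)
        (aux_isCompact_convexHull hcU).isClosed
    · exact convexHull_min (closure_mono (subset_convexHull ℝ U)) hCconv.closure
  have hext : x₀ ∉ Set.extremePoints ℝ (closure C) := by
    intro h
    exact hU0 (extremePoints_convexHull_subset (hK ▸ h))
  refine ⟨hext, ?_⟩
  have hext' := hext
  rw [mem_extremePoints] at hext'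
  push_neg at hext'
  obtain ⟨y, hy, z, hz, hseg, hnot⟩ := hext' hxK
  have hyz : y ≠ z := by
    rintro rfl
    rw [openSegment_same] at hseg
    rw [Set.mem_singleton_iff] at hseg
    subst hseg
    exact hnot rfl rfl
  obtain ⟨a, b, ha, hb', hab, hx0⟩ := hseg
  have key : ∀ w ∈ segment ℝ y z, w ∉ interior C := by
    rintro w ⟨c, d, hc, hd, hcd, rfl⟩ hwint
    set w := c • y + d • z
    rcases lt_trichotomy b d with hlt | heq | hgt
    · -- b < d : x₀ = (b/d) • w + (1 - b/d) • y
      have hd0 : 0 < d := lt_trans hb' hlt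
      have hs0 : 0 < b / d := div_pos hb' hd0
      have hs1 : b / d ≤ 1 := by
        rw [div_le_one hd0]; linarith
      have hxw : x₀ = (b / d) • w + (1 - b / d) • y := by
        rw [← hx0]
        match_scalars
        · field_simp
          nlinarith
        · field_simp
      have : x₀ ∈ interior C := by
        rw [hxw]
        exact hCconv.combo_interior_closure_mem_interior hwint hy hs0
          (by linarith) (by ring)
      exact hxnI this
    · -- b = d : w = x₀
      have hca : c = a := by linarith
      have hwx : w = x₀ := by
        show c • y + d • z = x₀
        rw [hca, ← heq, hx0]
      exact hxnI (hwx ▸ hwint)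
    · -- d < b : x₀ = (a/c) • w + (1 - a/c) • z
      have hc0 : 0 < c := by linarith
      have hs0 : 0 < a / c := div_pos ha hc0
      have hs1 : a / c ≤ 1 := by
        rw [div_le_one hc0]; linarith
      have hxw : x₀ = (a / c) • w + (1 - a / c) • z := by
        rw [← hx0]
        match_scalars
        · field_simp
        · field_simp
          nlinarith
      have : x₀ ∈ interior C := by
        rw [hxw]
        exact hCconv.combo_interior_closure_mem_interior hwint hz hs0
          (by linarith) (by ring)
      exact hxnI this
  have hsub : segment ℝ y z ⊆ frontier C := by
    intro w hw
    exact ⟨hCconv.closure.segment_subset hy hz hw, key w hw⟩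
  exact ⟨y, z, hyz, hsub (left_mem_segment ℝ y z), hsub (right_mem_segment ℝ y z),
    ⟨a, b, ha, hb', hab, hx0⟩, hsub⟩
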